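/- Let F be a nonempty finite subset of ℝ^n, let W : ℝ^n → ℝ^d be a linear map, and let f : ℝ^d → ℝ be quasiconvex. Then max_{x ∈ F} f(Wx) = max { f(u) : u is an extreme point of the polytope W(conv(F)) }; in particular, the maximum of f(Wx) over conv(F) is attained at a point of F whose W-image is an extreme point of W(conv(F)). -/

import Mathlib

/-- Quasiconvex combinatorial maximization: for a quasiconvex `f` and a linear map `W`,
the maximum of `f(Wx)` over a nonempty finite set `F` equals the maximum of `f` over the
extreme points of the polytope `W(conv F)`; in particular the maximum of `f ∘ W` over
`conv F` is attained at a point of `F` whose `W`-image is an extreme point of `W(conv F)`. -/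
theorem quasiconvex_max_at_extreme_point_of_image
    (n d : ℕ) (F : Finset (Fin n → ℝ)) (hF : F.Nonempty)
    (W : (Fin n → ℝ) →ₗ[ℝ] (Fin d → ℝ))
    (f : (Fin d → ℝ) → ℝ)
    (hf : ∀ t : ℝ, Convex ℝ {z : Fin d → ℝ | f z ≤ t}) :
    IsGreatest (f '' ((W '' (convexHull ℝ (F : Set (Fin n → ℝ)))).extremePoints ℝ))
        (F.sup' hF fun x => f (W x)) ∧
      ∃ x ∈ F, W x ∈ (W '' (convexHull ℝ (F : Set (Fin n → ℝ)))).extremePoints ℝ ∧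
        ∀ y ∈ convexHull ℝ (F : Set (Fin n → ℝ)), f (W y) ≤ f (W x) := by
  set M : ℝ := F.sup' hF fun x => f (W x) with hM
  set S : Set (Fin d → ℝ) := W '' (convexHull ℝ (F : Set (Fin n → ℝ))) with hS
  have hSim : S = convexHull ℝ (W '' (F : Set (Fin n → ℝ))) := W.image_convexHull _
  set E : Set (Fin d → ℝ) := S.extremePoints ℝ with hE
  have hEsub : E ⊆ W '' (F : Set (Fin n → ℝ)) := by
    rw [hE, hSim]; exact extremePoints_convexHull_subset
  have hEfin : E.Finite := (F.finite_toSet.image W).subset hEsub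
  have hScomp : IsCompact S := by
    rw [hSim]; exact (F.finite_toSet.image W).isCompact_convexHull ℝ
  have hSconv : Convex ℝ S := by rw [hSim]; exact convex_convexHull ℝ _
  have hSE : convexHull ℝ E = S := by
    have := closure_convexHull_extremePoints hScomp hSconv
    rwa [(hEfin.isCompact_convexHull ℝ).isClosed.closure_eq] at this
  -- every point of S has f ≤ M
  have hupper : ∀ z ∈ S, f z ≤ M := by
    intro z hz
    have hsub : W '' (F : Set (Fin n → ℝ)) ⊆ {z : Fin d → ℝ | f z ≤ M} := by
      rintro _ ⟨x, hx, rfl⟩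
      exact Finset.le_sup' (fun x => f (W x)) hx
    have : S ⊆ {z : Fin d → ℝ | f z ≤ M} := by
      rw [hSim]; exact convexHull_min hsub (hf M)
    exact this hz
  -- E is nonempty
  have hEne : E.Nonempty := by
    by_contra h
    rw [Set.not_nonempty_iff_eq_empty] at h
    obtain ⟨x0, hx0⟩ := hF
    have : W x0 ∈ S := ⟨x0, subset_convexHull ℝ _ hx0, rfl⟩
    rw [← hSE, h, convexHull_empty] at this
    exact this
  -- pick maximizer of f over E
  obtain ⟨u, huE', humax'⟩ := Finset.exists_max_image hEfin.toFinset f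
      (by rwa [Set.Finite.toFinset_nonempty])
  have huE : u ∈ E := hEfin.mem_toFinset.1 huE'
  have humax : ∀ v ∈ E, f v ≤ f u := fun v hv => humax' v (hEfin.mem_toFinset.2 hv)
  -- M ≤ f u
  have hMle : M ≤ f u := by
    apply Finset.sup'_le
    intro x hx
    have hWx : W x ∈ S := ⟨x, subset_convexHull ℝ _ hx, rfl⟩
    have : S ⊆ {z : Fin d → ℝ | f z ≤ f u} := by
      rw [← hSE]; exact convexHull_min (fun v hv => humax v hv) (hf (f u))
    exact this hWx
  have hfu : f u = M := le_antisymm (hupper u huE.1) hMle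
  constructor
  · constructor
    · exact ⟨u, huE, hfu⟩
    · rintro v ⟨z, hzE, rfl⟩
      exact hupper z hzE.1
  · obtain ⟨x, hxF, hxu⟩ := hEsub huE
    refine ⟨x, hxF, hxu ▸ huE, fun y hy => ?_⟩
    have : f (W y) ≤ M := hupper _ ⟨y, hy, rfl⟩
    rw [hxu, hfu]; exact this
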